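/- arXiv:2203.02405 — 3 statements merged into one kernel-verified Lean document; each statement's English description precedes it below -/
import Mathlib

section
/- Let γ, β be real numbers with γ ≥ |β|/√3. Then for all complex numbers z and w, Re((γ + iβ)(|z|²z − |w|²w) · conj(z − w)) ≥ 0; i.e., the map z ↦ (γ + iβ)|z|²z is monotone on ℂ viewed as ℝ². -/
lemma cubic_keyF (p q r : ℝ) :
    0 ≤ (p^2+q^2-(p+q)*r)^2 - 3*(p-q)^2*(p*q-r^2) := by
  rcases eq_or_ne ((p+q)^2+3*(p-q)^2) 0 with h0 | h0
  · have h1 : p + q = 0 := by nlinarith [sq_nonneg (p+q), sq_nonneg (p-q)]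
    have h2 : p - q = 0 := by nlinarith [sq_nonneg (p+q), sq_nonneg (p-q)]
    nlinarith [sq_nonneg r]
  · have hpos : 0 < (p+q)^2+3*(p-q)^2 := lt_of_le_of_ne (by positivity) (Ne.symm h0)
    nlinarith [sq_nonneg (4*r*((p+q)^2+3*(p-q)^2) - 2*(p+q)*((p+q)^2+(p-q)^2)),
      sq_nonneg ((p-q)^3), hpos]

lemma cubic_key (γ β p q r s : ℝ) (hγ : 0 ≤ γ) (hβ : β^2 ≤ 3*γ^2)
    (hrs : r^2 + s^2 = p*q) :
    0 ≤ γ*(p^2+q^2-(p+q)*r) + β*(p-q)*s := by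
  have hre : 0 ≤ p^2+q^2-(p+q)*r := by
    nlinarith [sq_nonneg (p-q), sq_nonneg (p+q-2*r), sq_nonneg s]
  have hkey : 3*((p-q)*s)^2 ≤ (p^2+q^2-(p+q)*r)^2 := by
    nlinarith [cubic_keyF p q r, sq_nonneg (p-q)]
  have h2 : (β*((p-q)*s))^2 ≤ (γ*(p^2+q^2-(p+q)*r))^2 := by
    nlinarith [mul_nonneg (sub_nonneg.2 hβ) (sq_nonneg ((p-q)*s)),
      mul_nonneg (sq_nonneg γ) (sub_nonneg.2 hkey)]
  have hA : 0 ≤ γ*(p^2+q^2-(p+q)*r) := mul_nonneg hγ hre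
  nlinarith [h2, hA, sq_nonneg (γ*(p^2+q^2-(p+q)*r) + β*(p-q)*s)]

theorem cubic_monotone_pointwise (γ β : ℝ) (h : |β| / Real.sqrt 3 ≤ γ) (z w : ℂ) :
    0 ≤ (((γ : ℂ) + (β : ℂ) * Complex.I) *
        (((‖z‖ : ℝ) : ℂ) ^ 2 * z - ((‖w‖ : ℝ) : ℂ) ^ 2 * w) *
        (starRingEnd ℂ) (z - w)).re := by
  have h3 : (0:ℝ) < Real.sqrt 3 := by positivity
  have hγ : 0 ≤ γ := le_trans (by positivity) h
  have habs : |β| ≤ γ * Real.sqrt 3 := (div_le_iff₀ h3).mp h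
  have hβ : β^2 ≤ 3*γ^2 := by
    have hs : Real.sqrt 3 ^ 2 = 3 := Real.sq_sqrt (by norm_num)
    nlinarith [abs_nonneg β, sq_abs β, mul_nonneg hγ h3.le]
  have hz := cubic_key γ β (z.re^2+z.im^2) (w.re^2+w.im^2)
    (z.re*w.re+z.im*w.im) (z.im*w.re-z.re*w.im) hγ hβ (by ring)
  have e1 : (((‖z‖ : ℝ) : ℂ))^2 = ((z.re^2+z.im^2 : ℝ) : ℂ) := by
    rw [← Complex.ofReal_pow, Complex.sq_norm, Complex.normSq_apply]; ring_nf
  have e2 : (((‖w‖ : ℝ) : ℂ))^2 = ((w.re^2+w.im^2 : ℝ) : ℂ) := by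
    rw [← Complex.ofReal_pow, Complex.sq_norm, Complex.normSq_apply]; ring_nf
  rw [e1, e2]
  simp only [Complex.mul_re, Complex.mul_im, Complex.add_re, Complex.add_im,
    Complex.sub_re, Complex.sub_im, Complex.ofReal_re, Complex.ofReal_im,
    Complex.I_re, Complex.I_im, Complex.conj_re, Complex.conj_im]
  nlinarith [hz]
end

section
/- Let γ, β be real numbers with γ > |β|/√3 and let a = (a₁, a₂) ∈ ℝ² be nonzero. Then the symmetric matrix B(a) with entries B₁₁ = 3γa₁² − 2βa₁a₂ + γa₂², B₁₂ = B₂₁ = βa₁² + 2γa₁a₂ − βa₂², B₂₂ = γa₁² + 2βa₁a₂ + 3γa₂² is positive definite. -/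
theorem B_posDef (γ β a₁ a₂ : ℝ) (hγ : |β| / Real.sqrt 3 < γ) (ha : (a₁, a₂) ≠ (0, 0)) :
    ∀ w : Fin 2 → ℝ, w ≠ 0 →
      0 < dotProduct w
        (Matrix.mulVec !![3 * γ * a₁ ^ 2 - 2 * β * a₁ * a₂ + γ * a₂ ^ 2,
                          β * a₁ ^ 2 + 2 * γ * a₁ * a₂ - β * a₂ ^ 2;
                          β * a₁ ^ 2 + 2 * γ * a₁ * a₂ - β * a₂ ^ 2,
                          γ * a₁ ^ 2 + 2 * β * a₁ * a₂ + 3 * γ * a₂ ^ 2] w) := by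
  have h3 : Real.sqrt 3 > 0 := Real.sqrt_pos.mpr (by norm_num)
  have hγ0 : 0 < γ := lt_of_le_of_lt (div_nonneg (abs_nonneg β) h3.le) hγ
  have hβ : |β| < γ * Real.sqrt 3 := by
    rw [div_lt_iff₀ h3] at hγ; linarith
  have hsq : β ^ 2 < 3 * γ ^ 2 := by
    have := sq_lt_sq' (neg_lt_of_abs_lt hβ) (lt_of_abs_lt hβ)
    have h33 : Real.sqrt 3 ^ 2 = 3 := Real.sq_sqrt (by norm_num)
    nlinarith
  have haa : 0 < a₁ ^ 2 + a₂ ^ 2 := by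
    rcases (by simpa [Prod.ext_iff] using ha : ¬(a₁ = 0 ∧ a₂ = 0)) with h
    by_contra hc
    push_neg at hc
    have h1 : a₁ = 0 := by nlinarith [sq_nonneg a₁, sq_nonneg a₂]
    have h2 : a₂ = 0 := by nlinarith [sq_nonneg a₁, sq_nonneg a₂]
    exact h ⟨h1, h2⟩
  intro w hw
  have hww : 0 < w 0 ^ 2 + w 1 ^ 2 := by
    by_contra hc
    push_neg at hc
    apply hw
    have h0 : w 0 = 0 := by nlinarith [sq_nonneg (w 0), sq_nonneg (w 1)]
    have h1 : w 1 = 0 := by nlinarith [sq_nonneg (w 0), sq_nonneg (w 1)]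
    funext i
    fin_cases i <;> simpa
  simp [dotProduct, Matrix.mulVec, Fin.sum_univ_two]
  nlinarith [sq_nonneg (β * (a₁ * w 0 + a₂ * w 1) - γ * (a₂ * w 0 - a₁ * w 1)),
    sq_nonneg (β * (a₂ * w 0 - a₁ * w 1) - 3 * γ * (a₁ * w 0 + a₂ * w 1)),
    mul_pos (sub_pos.mpr hsq) (mul_pos haa hww), hγ0, mul_pos hγ0 (mul_pos haa hww)]
end

section
/- Let γ, β ∈ ℝ with √3·γ ≥ |β|, and define H : ℝ² → ℝ² by H(a) = (a₁² + a₂²)·(γa₁ − βa₂, βa₁ + γa₂). Then H is monotone: ⟨H(u) − H(v), u − v⟩ ≥ 0 for all u, v ∈ ℝ². -/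
private lemma keysq' (A B p : ℝ) :
    3 * (A - B) ^ 2 * (A * B - p ^ 2) ≤ (A ^ 2 + B ^ 2 - (A + B) * p) ^ 2 := by
  rcases eq_or_lt_of_le (show (0:ℝ) ≤ (A + B) ^ 2 + 3 * (A - B) ^ 2 by positivity) with h0 | hpos
  · have h1 : (A + B) ^ 2 = 0 := by nlinarith [sq_nonneg (A - B), sq_nonneg (A + B)]
    have h2 : (A - B) ^ 2 = 0 := by nlinarith [sq_nonneg (A - B), sq_nonneg (A + B)]
    have h1' : A + B = 0 := sq_eq_zero_iff.mp h1
    have h2' : A - B = 0 := sq_eq_zero_iff.mp h2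
    have hA : A = 0 := by linarith
    have hB : B = 0 := by linarith
    subst hA; subst hB; nlinarith [sq_nonneg p]
  · nlinarith [hpos, sq_nonneg (2 * ((A + B) ^ 2 + 3 * (A - B) ^ 2) * p
      - (A + B) * ((A + B) ^ 2 + (A - B) ^ 2)), sq_nonneg ((A - B) ^ 3)]

private lemma Xnonneg (A B p q : ℝ) (hpq : p ^ 2 + q ^ 2 = A * B) :
    0 ≤ A ^ 2 + B ^ 2 - (A + B) * p := by
  nlinarith [sq_nonneg (A + B - 2 * p), sq_nonneg (A + B + 2 * p), sq_nonneg (A - B),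
    sq_nonneg q]

private lemma mono_abs (γ β s X c : ℝ) (hs : 0 ≤ s) (hγ : 0 ≤ γ)
    (hb1 : -(s * γ) ≤ β) (hb2 : β ≤ s * γ) (hX : 0 ≤ X)
    (hsq : s ^ 2 * c ^ 2 ≤ X ^ 2) : 0 ≤ γ * X + β * c := by
  rcases le_total 0 c with hc | hc
  · have hsc : s * c ≤ X := by nlinarith [mul_nonneg hs hc]
    have h1 := mul_nonneg hγ (sub_nonneg.2 hsc)
    have h2 := mul_nonneg (show (0:ℝ) ≤ β + s * γ by linarith) hc
    nlinarith
  · have hsc : s * (-c) ≤ X := by nlinarith [mul_nonneg hs (neg_nonneg.2 hc)]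
    have h1 := mul_nonneg hγ (sub_nonneg.2 hsc)
    have h2 := mul_nonneg (show (0:ℝ) ≤ s * γ - β by linarith) (neg_nonneg.2 hc)
    nlinarith

theorem cubic_real_monotone (γ β : ℝ) (h : |β| ≤ Real.sqrt 3 * γ) :
    ∀ u v : ℝ × ℝ,
      0 ≤ ((u.1 ^ 2 + u.2 ^ 2) * (γ * u.1 - β * u.2) -
              (v.1 ^ 2 + v.2 ^ 2) * (γ * v.1 - β * v.2)) * (u.1 - v.1) +
          ((u.1 ^ 2 + u.2 ^ 2) * (β * u.1 + γ * u.2) -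
              (v.1 ^ 2 + v.2 ^ 2) * (β * v.1 + γ * v.2)) * (u.2 - v.2) := by
  intro u v
  have hs : (0:ℝ) ≤ Real.sqrt 3 := Real.sqrt_nonneg 3
  have hspos : (0:ℝ) < Real.sqrt 3 := Real.sqrt_pos.2 (by norm_num)
  have hγ : 0 ≤ γ := by
    have h0 : (0:ℝ) ≤ Real.sqrt 3 * γ := le_trans (abs_nonneg β) h
    nlinarith [hspos, h0]
  have hb2 : β ≤ Real.sqrt 3 * γ := le_trans (le_abs_self β) h
  have hb1 : -(Real.sqrt 3 * γ) ≤ β := by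
    have := neg_abs_le β
    linarith
  set A := u.1 ^ 2 + u.2 ^ 2 with hA
  set B := v.1 ^ 2 + v.2 ^ 2 with hB
  set p := u.1 * v.1 + u.2 * v.2 with hp
  set q := u.2 * v.1 - u.1 * v.2 with hq
  have hpq : p ^ 2 + q ^ 2 = A * B := by rw [hp, hq, hA, hB]; ring
  have hX := Xnonneg A B p q hpq
  have hq2 : q ^ 2 = A * B - p ^ 2 := by linarith
  have hkey : 3 * (A - B) ^ 2 * q ^ 2 ≤ (A ^ 2 + B ^ 2 - (A + B) * p) ^ 2 := by
    rw [hq2]; exact keysq' A B p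
  have hsq3 : (Real.sqrt 3) ^ 2 = 3 := Real.sq_sqrt (by norm_num)
  have hsq : (Real.sqrt 3) ^ 2 * ((A - B) * q) ^ 2 ≤ (A ^ 2 + B ^ 2 - (A + B) * p) ^ 2 := by
    rw [hsq3]; nlinarith [hkey]
  have hmain := mono_abs γ β (Real.sqrt 3) (A ^ 2 + B ^ 2 - (A + B) * p) ((A - B) * q)
    hs hγ hb1 hb2 hX hsq
  have hident : ((A) * (γ * u.1 - β * u.2) - (B) * (γ * v.1 - β * v.2)) * (u.1 - v.1) +
      ((A) * (β * u.1 + γ * u.2) - (B) * (β * v.1 + γ * v.2)) * (u.2 - v.2)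
      = γ * (A ^ 2 + B ^ 2 - (A + B) * p) + β * ((A - B) * q) := by
    rw [hA, hB, hp, hq]; ring
  linarith [hident ▸ hmain]
end
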